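/- There exists a constant D > 0, depending only on α, C₋₁ and C₂, with the following property. Let λ > 0 and δ ≥ 0. Let B' : V × V → ℝ be a second bilinear form satisfying α⁻¹·s(u,u) ≤ B'(u,u), |B'(u,v)| ≤ α·√(s(u,u)·s(v,v)), and |B(u,v) − B'(u,v)| ≤ δ·√(s(u,u)·s(v,v)) for all u,v ∈ V. Let h, h' ∈ H with ‖h‖_H ≤ C₂, ‖h'‖_H ≤ C₂, ‖h − h'‖_H ≤ C₂·δ, and let F, F' : V → ℝ be linear with |F(v)| ≤ C₋₁·√(s(v,v)), |F'(v)| ≤ C₋₁·√(s(v,v)), |F(v) − F'(v)| ≤ C₋₁·δ·√(s(v,v)) for all v ∈ V. If u ∈ V satisfies λ⟨u,v⟩_H + B(u,v) = ⟨h,v⟩_H + F(v) for all v ∈ V and u' ∈ V satisfies λ⟨u',v⟩_H + B'(u',v) = ⟨h',v⟩_H + F'(v) for all v ∈ V, then λ‖u − u'‖_H² + s(u − u', u − u') ≤ D·(1 + C₂²/λ)·δ². (Abstract form of the Lipschitz estimate (19b) of Proposition 6.1.) -/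

import Mathlib

set_option maxHeartbeats 4000000


open scoped RealInnerProductSpace

/-- Abstract Lipschitz estimate (19b) of Proposition 6.1:
there is a constant `D > 0`, depending only on `α`, `C₋₁` and `C₂`, such that
if two resolvent problems (for forms `B`, `B'` and data `(h,F)`, `(h',F')`)
differ by at most `δ`, then their solutions satisfy
`λ‖u − u'‖² + s(u − u', u − u') ≤ D(1 + C₂²/λ)·δ²`. -/
theorem abstract_lipschitz_estimate
    {H V : Type*}
    [NormedAddCommGroup H] [InnerProductSpace ℝ H] [CompleteSpace H]
    [NormedAddCommGroup V] [InnerProductSpace ℝ V] [CompleteSpace V]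
    (ι : V →ₗ[ℝ] H) (hι_inj : Function.Injective ι) (hι_dense : DenseRange ι)
    (s : V →ₗ[ℝ] V →ₗ[ℝ] ℝ)
    (hs_symm : ∀ u v : V, s u v = s v u)
    (hs_pos : ∀ u : V, 0 ≤ s u u)
    (hPi : ∀ u v : V, ⟪u, v⟫ = ⟪ι u, ι v⟫ + s u v)
    (B : V →ₗ[ℝ] V →ₗ[ℝ] ℝ) (α : ℝ) (hα : 0 < α)
    (hB_coer : ∀ u : V, α⁻¹ * s u u ≤ B u u)
    (hB_bdd : ∀ u v : V, |B u v| ≤ α * Real.sqrt (s u u * s v v))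
    (C2 Cm1 : ℝ) (hC2 : 0 ≤ C2) (hCm1 : 0 ≤ Cm1) :
    ∃ D : ℝ, 0 < D ∧
      ∀ lam : ℝ, 0 < lam →
      ∀ δ : ℝ, 0 ≤ δ →
      ∀ B' : V →ₗ[ℝ] V →ₗ[ℝ] ℝ,
        (∀ u : V, α⁻¹ * s u u ≤ B' u u) →
        (∀ u v : V, |B' u v| ≤ α * Real.sqrt (s u u * s v v)) →
        (∀ u v : V, |B u v - B' u v| ≤ δ * Real.sqrt (s u u * s v v)) →
      ∀ h h' : H, ‖h‖ ≤ C2 → ‖h'‖ ≤ C2 → ‖h - h'‖ ≤ C2 * δ →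
      ∀ F F' : V →ₗ[ℝ] ℝ,
        (∀ v : V, |F v| ≤ Cm1 * Real.sqrt (s v v)) →
        (∀ v : V, |F' v| ≤ Cm1 * Real.sqrt (s v v)) →
        (∀ v : V, |F v - F' v| ≤ Cm1 * δ * Real.sqrt (s v v)) →
      ∀ u u' : V,
        (∀ v : V, lam * ⟪ι u, ι v⟫ + B u v = ⟪h, ι v⟫ + F v) →
        (∀ v : V, lam * ⟪ι u', ι v⟫ + B' u' v = ⟪h', ι v⟫ + F' v) →
        lam * ‖ι u - ι u'‖ ^ 2 + s (u - u') (u - u') ≤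
          D * (1 + C2 ^ 2 / lam) * δ ^ 2 := by
  refine ⟨2 * (1 + α) * (1 + α ^ 2) * (1 + α * Cm1 ^ 2), by positivity, ?_⟩
  intro lam hlam δ hδ B' hB'_coer hB'_bdd hBB' h h' hh hh' hhh' F F' hF hF' hFF'
    u u' hu hu'
  set w : V := u - u' with hw
  have hιw : ι w = ι u - ι u' := by simp [hw]
  set x : ℝ := ‖ι u - ι u'‖ with hx
  set t : ℝ := Real.sqrt (s w w) with ht
  set σ : ℝ := Real.sqrt (s u' u') with hσ
  have ht2 : t ^ 2 = s w w := Real.sq_sqrt (hs_pos w)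
  have hσ2 : σ ^ 2 = s u' u' := Real.sq_sqrt (hs_pos u')
  have hx0 : 0 ≤ x := norm_nonneg _
  have ht0 : 0 ≤ t := Real.sqrt_nonneg _
  have hσ0 : 0 ≤ σ := Real.sqrt_nonneg _
  set q : ℝ := C2 ^ 2 / lam with hq
  have hq0 : 0 ≤ q := by positivity
  have hlamq : lam * q = C2 ^ 2 := by rw [hq]; field_simp
  -- Step 1: a priori bound on σ² = s u' u'
  have hσbound : σ ^ 2 ≤ α * q / 2 + α ^ 2 * Cm1 ^ 2 := by
    have e := hu' u'
    have h1 : α⁻¹ * s u' u' ≤ B' u' u' := hB'_coer u'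
    have h4 : ⟪ι u', ι u'⟫ = ‖ι u'‖ ^ 2 := real_inner_self_eq_norm_sq _
    have h2 : ⟪h', ι u'⟫ ≤ C2 * ‖ι u'‖ := by
      have := real_inner_le_norm h' (ι u')
      nlinarith [norm_nonneg (ι u')]
    have h3 : F' u' ≤ Cm1 * σ := le_trans (le_abs_self _) (hF' u')
    have hx'0 : 0 ≤ ‖ι u'‖ := norm_nonneg _
    have hαα : α * α⁻¹ = 1 := mul_inv_cancel₀ (ne_of_gt hα)
    rw [h4] at e
    -- α⁻¹ σ² ≤ C2‖ιu'‖ - lam ‖ιu'‖² + Cm1 σ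
    have key : α⁻¹ * σ ^ 2 ≤ C2 * ‖ι u'‖ - lam * ‖ι u'‖ ^ 2 + Cm1 * σ := by
      rw [hσ2]; linarith [e, h1, h2, h3]
    have hinv : α * (α⁻¹ * σ ^ 2) = σ ^ 2 := by
      field_simp
    have key' : σ ^ 2 ≤ α * C2 * ‖ι u'‖ - α * lam * ‖ι u'‖ ^ 2 + α * Cm1 * σ := by
      have := mul_le_mul_of_nonneg_left key hα.le
      rw [hinv] at this
      nlinarith [this]
    -- complete squares, after multiplying by 2 lam
    have key2 : 2 * lam * σ ^ 2 ≤ 2 * lam * (α * q / 2 + α ^ 2 * Cm1 ^ 2) := by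
      nlinarith [mul_nonneg hα.le (sq_nonneg (2 * lam * ‖ι u'‖ - C2)),
        mul_nonneg hlam.le (sq_nonneg (σ - α * Cm1)),
        mul_le_mul_of_nonneg_left key' (by positivity : (0:ℝ) ≤ 2 * lam),
        hlamq, hα.le, hlam.le]
    exact le_of_mul_le_mul_left key2 (by positivity)
  -- Step 2: the differenced equation tested at w
  have e1 := hu w
  have e2 := hu' w
  have hBsplit : B w w = B u w - B u' w := by
    have hB : B w = B u - B u' := by rw [hw]; exact map_sub B u u'
    rw [hB, LinearMap.sub_apply]
  have hinner : ⟪ι u, ι w⟫ - ⟪ι u', ι w⟫ = x ^ 2 := by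
    rw [← inner_sub_left, ← hιw, hιw, hx]
    exact real_inner_self_eq_norm_sq _
  have hinnerh : ⟪h, ι w⟫ - ⟪h', ι w⟫ = ⟪h - h', ι w⟫ := (inner_sub_left _ _ _).symm
  have main_eq : lam * x ^ 2 + B w w =
      ⟪h - h', ι w⟫ + (F w - F' w) + (B' u' w - B u' w) := by
    have : lam * (⟪ι u, ι w⟫ - ⟪ι u', ι w⟫) + (B u w - B' u' w)
        = (⟪h, ι w⟫ - ⟪h', ι w⟫) + (F w - F' w) := by linear_combination e1 - e2
    rw [hinner, hinnerh] at this
    linarith [hBsplit, this]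
  -- bounds on the right-hand side
  have hb1 : ⟪h - h', ι w⟫ ≤ C2 * δ * x := by
    have h1 := real_inner_le_norm (h - h') (ι w)
    have h2 : ‖h - h'‖ * ‖ι w‖ ≤ (C2 * δ) * ‖ι w‖ :=
      mul_le_mul_of_nonneg_right hhh' (norm_nonneg _)
    rw [hιw] at h2
    calc ⟪h - h', ι w⟫ ≤ ‖h - h'‖ * ‖ι w‖ := h1
      _ ≤ C2 * δ * x := by rw [hιw] at h1 ⊢; exact h2
  have hb2 : F w - F' w ≤ Cm1 * δ * t := le_trans (le_abs_self _) (hFF' w)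
  have hb3 : B' u' w - B u' w ≤ δ * (σ * t) := by
    have h1 := hBB' u' w
    have h2 : Real.sqrt (s u' u' * s w w) = σ * t := Real.sqrt_mul (hs_pos u') _
    have := neg_abs_le (B u' w - B' u' w)
    nlinarith [h1, abs_nonneg (B u' w - B' u' w)]
  have hcoer : α⁻¹ * t ^ 2 ≤ B w w := by rw [ht2]; exact hB_coer w
  -- main inequality
  have main : lam * x ^ 2 + α⁻¹ * t ^ 2 ≤ C2 * δ * x + (Cm1 + σ) * δ * t := by
    nlinarith [main_eq, hb1, hb2, hb3, hcoer]
  have hαα : α * α⁻¹ = 1 := mul_inv_cancel₀ (ne_of_gt hα)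
  -- Young's inequalities
  have i1 : 2 * (C2 * δ) * x ≤ lam * x ^ 2 + q * δ ^ 2 := by
    have hsq : lam * (2 * (C2 * δ) * x) ≤ lam * (lam * x ^ 2 + q * δ ^ 2) := by
      nlinarith [sq_nonneg (lam * x - C2 * δ), hlamq]
    exact le_of_mul_le_mul_left hsq hlam
  have i2 : 2 * ((Cm1 + σ) * δ) * t ≤ α⁻¹ * t ^ 2 + α * (Cm1 + σ) ^ 2 * δ ^ 2 := by
    have e1' : α * (α⁻¹ * t - (Cm1 + σ) * δ) ^ 2 =
        α⁻¹ * t ^ 2 - 2 * ((Cm1 + σ) * δ) * t + α * (Cm1 + σ) ^ 2 * δ ^ 2 := by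
      field_simp
      ring
    have h0 : 0 ≤ α * (α⁻¹ * t - (Cm1 + σ) * δ) ^ 2 := by positivity
    linarith [h0, e1']
  -- combine: lam x² + α⁻¹ t² ≤ q δ² + α (Cm1+σ)² δ²
  have j : lam * x ^ 2 + α⁻¹ * t ^ 2 ≤ q * δ ^ 2 + α * (Cm1 + σ) ^ 2 * δ ^ 2 := by
    linarith [main, i1, i2]
  have hxl : 0 ≤ lam * x ^ 2 := by positivity
  have htl : 0 ≤ α⁻¹ * t ^ 2 := by positivity
  have j2 : lam * x ^ 2 + t ^ 2 ≤
      (1 + α) * (q * δ ^ 2 + α * (Cm1 + σ) ^ 2 * δ ^ 2) := by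
    have ht' : t ^ 2 ≤ α * (q * δ ^ 2 + α * (Cm1 + σ) ^ 2 * δ ^ 2) := by
      have h5 : α⁻¹ * t ^ 2 ≤ q * δ ^ 2 + α * (Cm1 + σ) ^ 2 * δ ^ 2 := by linarith
      have h6 := mul_le_mul_of_nonneg_left h5 hα.le
      have h7 : α * (α⁻¹ * t ^ 2) = t ^ 2 := by field_simp
      rw [h7] at h6
      exact h6
    have hx' : lam * x ^ 2 ≤ q * δ ^ 2 + α * (Cm1 + σ) ^ 2 * δ ^ 2 := by linarith
    linarith [ht', hx']
  have j3 : (Cm1 + σ) ^ 2 ≤ 2 * Cm1 ^ 2 * (1 + α ^ 2) + α * q := by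
    linarith [sq_nonneg (Cm1 - σ), hσbound]
  have j4 : (1 + α) * α * δ ^ 2 * (Cm1 + σ) ^ 2 ≤
      (1 + α) * α * δ ^ 2 * (2 * Cm1 ^ 2 * (1 + α ^ 2) + α * q) :=
    mul_le_mul_of_nonneg_left j3 (by positivity)
  -- final polynomial comparison
  rw [← ht2]
  have hgoal : (1 + α) * (q * δ ^ 2 + α * (Cm1 + σ) ^ 2 * δ ^ 2) ≤
      2 * (1 + α) * (1 + α ^ 2) * (1 + α * Cm1 ^ 2) * (1 + q) * δ ^ 2 := by
    have hpoly : 0 ≤ δ ^ 2 * (1 + α) *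
        (2 * (1 + α ^ 2) + (1 + α ^ 2) * q + 2 * α * Cm1 ^ 2 * (1 + α ^ 2) * q) := by
      positivity
    have hring : 2 * (1 + α) * (1 + α ^ 2) * (1 + α * Cm1 ^ 2) * (1 + q) * δ ^ 2 =
        (1 + α) * q * δ ^ 2 +
        (1 + α) * α * δ ^ 2 * (2 * Cm1 ^ 2 * (1 + α ^ 2) + α * q) +
        δ ^ 2 * (1 + α) *
          (2 * (1 + α ^ 2) + (1 + α ^ 2) * q + 2 * α * Cm1 ^ 2 * (1 + α ^ 2) * q) := by
      ring
    linarith [j4, hpoly, hring]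
  calc lam * x ^ 2 + t ^ 2 ≤ (1 + α) * (q * δ ^ 2 + α * (Cm1 + σ) ^ 2 * δ ^ 2) := j2
    _ ≤ 2 * (1 + α) * (1 + α ^ 2) * (1 + α * Cm1 ^ 2) * (1 + q) * δ ^ 2 := hgoal
    _ = 2 * (1 + α) * (1 + α ^ 2) * (1 + α * Cm1 ^ 2) * (1 + C2 ^ 2 / lam) * δ ^ 2 := by
        rw [hq]
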